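/- Let M be an n×n real symmetric positive-definite matrix and W an n×k real matrix of rank k with k ≥ 1. Let G = Wᵀ M⁻¹ W and P = I − M⁻¹ W G⁻¹ Wᵀ. Then kinetic energy is NOT preserved for all pre-impact velocities: there exists v ∈ ℝⁿ with (P v)ᵀ M (P v) < vᵀ M v. Consequently, a rigid-body system with at least one active impact constraint of full rank and positive-definite mass matrix cannot conserve kinetic energy across plastic impacts for all velocities. -/

import Mathlib

open Matrix

lemma inj_of_rank {n k : ℕ} (W : Matrix (Fin n) (Fin k) ℝ) (hW : W.rank = k) :
    Function.Injective W.mulVec := by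
  have h := LinearMap.finrank_range_add_finrank_ker W.mulVecLin
  rw [show Module.finrank ℝ (LinearMap.range W.mulVecLin) = W.rank from rfl, hW] at h
  simp at h
  exact LinearMap.ker_eq_bot.mp h

lemma G_posdef {n k : ℕ} (M : Matrix (Fin n) (Fin n) ℝ) (hM : M.PosDef)
    (W : Matrix (Fin n) (Fin k) ℝ) (hW : W.rank = k) :
    (Wᵀ * M⁻¹ * W).PosDef := by
  have hMi : M⁻¹.PosDef := hM.inv
  have hs : M⁻¹ᵀ = M⁻¹ := by
    have := hMi.isHermitian
    rwa [Matrix.IsHermitian, conjTranspose_eq_transpose_of_trivial] at this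
  rw [Matrix.posDef_iff_dotProduct_mulVec]
  constructor
  · show (Wᵀ * M⁻¹ * W)ᴴ = _
    rw [conjTranspose_eq_transpose_of_trivial]
    simp [Matrix.transpose_mul, hs, Matrix.mul_assoc]
  · intro x hx
    have hWx : W *ᵥ x ≠ 0 := fun h => hx (inj_of_rank W hW (by simpa using h))
    have := hMi.dotProduct_mulVec_pos hWx
    simpa [← Matrix.mulVec_mulVec, Matrix.dotProduct_mulVec,
      Matrix.vecMul_transpose] using this

/-- Equations (13)–(14): with a positive-definite mass matrix and at least one
active full-rank impact constraint, kinetic energy cannot be preserved across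
plastic impacts for all pre-impact velocities: some velocity strictly loses
energy. Here `G = Wᵀ M⁻¹ W` and `P = I − M⁻¹ W G⁻¹ Wᵀ`. -/
theorem impact_energy_not_conserved {n k : ℕ} (hk : 1 ≤ k)
    (M : Matrix (Fin n) (Fin n) ℝ) (hM : M.PosDef)
    (W : Matrix (Fin n) (Fin k) ℝ) (hW : W.rank = k) :
    ∃ v : Fin n → ℝ,
      ((1 - M⁻¹ * W * (Wᵀ * M⁻¹ * W)⁻¹ * Wᵀ) *ᵥ v) ⬝ᵥ
          (M *ᵥ ((1 - M⁻¹ * W * (Wᵀ * M⁻¹ * W)⁻¹ * Wᵀ) *ᵥ v)) <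
        v ⬝ᵥ (M *ᵥ v) := by
  set G := Wᵀ * M⁻¹ * W with hGdef
  have hG : G.PosDef := G_posdef M hM W hW
  have hGinv : G⁻¹ * G = 1 := Matrix.nonsing_inv_mul G (isUnit_iff_ne_zero.mpr hG.det_pos.ne')
  set c : Fin k → ℝ := Pi.single ⟨0, hk⟩ 1 with hc
  have hc0 : c ≠ 0 := by
    intro h
    have := congrFun h ⟨0, hk⟩
    simp [hc] at this
  set v : Fin n → ℝ := (M⁻¹ * W) *ᵥ c with hv
  refine ⟨v, ?_⟩
  have key : (1 - M⁻¹ * W * G⁻¹ * Wᵀ) * (M⁻¹ * W) = 0 := by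
    rw [Matrix.sub_mul, Matrix.one_mul]
    rw [show M⁻¹ * W * G⁻¹ * Wᵀ * (M⁻¹ * W) = M⁻¹ * W * (G⁻¹ * G) by
      simp only [Matrix.mul_assoc, hGdef]]
    rw [hGinv, Matrix.mul_one, sub_self]
  have hPv : (1 - M⁻¹ * W * G⁻¹ * Wᵀ) *ᵥ v = 0 := by
    rw [hv, Matrix.mulVec_mulVec, key, Matrix.zero_mulVec]
  rw [hPv]
  simp only [Matrix.mulVec_zero, dotProduct_zero]
  have hv0 : v ≠ 0 := by
    intro h
    apply hc0
    have h1 : Wᵀ *ᵥ v = G *ᵥ c := by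
      rw [hv, Matrix.mulVec_mulVec, ← Matrix.mul_assoc, hGdef]
    rw [h, Matrix.mulVec_zero] at h1
    have := congrArg (G⁻¹ *ᵥ ·) h1
    simpa [Matrix.mulVec_mulVec, hGinv] using this.symm
  have := hM.dotProduct_mulVec_pos hv0
  simpa using this
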